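/- Let E = ℝ^d with the Euclidean inner product, let g : E → ℝ be differentiable with L-Lipschitz gradient ∇g (L > 0), let f : E → ℝ, let F : E × E → ℝ be a tangent majorant of f, let 0 < τ < 1/L, set h = f + g, and assume h is bounded from below. Let (x^(n)) be a sequence in E such that for every n, x^(n+1) is a global minimizer of z ↦ F(z, x^(n)) + g(x^(n)) + ⟨z − x^(n), ∇g(x^(n))⟩ + (1/(2τ))‖z − x^(n)‖². Then the successive differences tend to zero: ‖x^(n+1) − x^(n)‖ → 0 as n → ∞. -/

import Mathlib

open scoped RealInnerProductSpace

private lemma inner_gradient_eq {d : ℕ} (g : EuclideanSpace ℝ (Fin d) → ℝ)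
    (hg : Differentiable ℝ g) (p v : EuclideanSpace ℝ (Fin d)) :
    ⟪gradient g p, v⟫ = fderiv ℝ g p v := by
  rw [gradient, InnerProductSpace.toDual_symm_apply]

/-- Descent lemma. -/
private lemma descent_lemma {d : ℕ} (g : EuclideanSpace ℝ (Fin d) → ℝ)
    (L : ℝ) (hL : 0 ≤ L) (hg : Differentiable ℝ g)
    (hlip : ∀ a b : EuclideanSpace ℝ (Fin d),
      ‖gradient g a - gradient g b‖ ≤ L * ‖a - b‖)
    (p q : EuclideanSpace ℝ (Fin d)) :
    g q ≤ g p + ⟪gradient g p, q - p⟫ + L / 2 * ‖q - p‖ ^ 2 := by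
  set v := q - p with hv
  set φ : ℝ → ℝ := fun t =>
    g (p + t • v) - t * ⟪gradient g p, v⟫ - L / 2 * t ^ 2 * ‖v‖ ^ 2 with hφ
  have hline : ∀ t : ℝ, HasDerivAt (fun s : ℝ => p + s • v) v t := by
    intro t
    simpa using ((hasDerivAt_id t).smul_const v).const_add p
  have hder : ∀ t : ℝ, HasDerivAt φ
      (⟪gradient g (p + t • v), v⟫ - ⟪gradient g p, v⟫ - L * t * ‖v‖ ^ 2) t := by
    intro t
    have h1 : HasDerivAt (fun s : ℝ => g (p + s • v)) (fderiv ℝ g (p + t • v) v) t :=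
      (hg (p + t • v)).hasFDerivAt.comp_hasDerivAt t (hline t)
    rw [← inner_gradient_eq g hg] at h1
    have h2 : HasDerivAt (fun s : ℝ => s * ⟪gradient g p, v⟫)
        (⟪gradient g p, v⟫) t := by
      simpa using (hasDerivAt_id t).mul_const (⟪gradient g p, v⟫)
    have h3 : HasDerivAt (fun s : ℝ => L / 2 * s ^ 2 * ‖v‖ ^ 2)
        (L * t * ‖v‖ ^ 2) t := by
      have := ((hasDerivAt_pow 2 t).const_mul (L / 2)).mul_const (‖v‖ ^ 2)
      refine this.congr_deriv ?_
      ring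
    exact (h1.sub h2).sub h3
  have hmono : AntitoneOn φ (Set.Icc 0 1) := by
    apply antitoneOn_of_deriv_nonpos (convex_Icc 0 1)
    · exact (Continuous.continuousOn (continuous_iff_continuousAt.2 fun t => (hder t).continuousAt))
    · intro t _
      exact ((hder t).differentiableAt).differentiableWithinAt
    · intro t ht
      rw [interior_Icc] at ht
      rw [(hder t).deriv]
      have hb : ⟪gradient g (p + t • v) - gradient g p, v⟫
          ≤ L * t * ‖v‖ ^ 2 := by
        calc ⟪gradient g (p + t • v) - gradient g p, v⟫
            ≤ ‖gradient g (p + t • v) - gradient g p‖ * ‖v‖ := real_inner_le_norm _ _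
          _ ≤ (L * ‖(p + t • v) - p‖) * ‖v‖ := by
              gcongr; exact hlip _ _
          _ = L * (|t| * ‖v‖) * ‖v‖ := by
              rw [add_sub_cancel_left, norm_smul, Real.norm_eq_abs]
          _ = L * t * ‖v‖ ^ 2 := by
              rw [abs_of_pos ht.1]; ring
      rw [inner_sub_left] at hb
      linarith
  have h01 := hmono (Set.mem_Icc.2 ⟨le_refl 0, zero_le_one⟩)
      (Set.mem_Icc.2 ⟨zero_le_one, le_refl 1⟩) zero_le_one
  simp only [hφ, zero_smul, add_zero, one_smul, zero_mul, sub_zero, one_pow, mul_one,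
    zero_pow, mul_zero, ne_eq, OfNat.ofNat_ne_zero, not_false_eq_true] at h01
  have : p + v = q := by rw [hv]; abel
  rw [this] at h01
  linarith

/-- Successive differences of the majorized forward-backward iterates tend to zero
when `h = f + g` is bounded from below. -/
theorem majorized_fb_successive_differences_tendsto_zero {d : ℕ}
    (g f : EuclideanSpace ℝ (Fin d) → ℝ)
    (F : EuclideanSpace ℝ (Fin d) × EuclideanSpace ℝ (Fin d) → ℝ)
    (L τ : ℝ) (hL : 0 < L)
    (hg : Differentiable ℝ g)
    (hlip : ∀ a b : EuclideanSpace ℝ (Fin d),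
      ‖gradient g a - gradient g b‖ ≤ L * ‖a - b‖)
    (hmaj : ∀ x xt : EuclideanSpace ℝ (Fin d), f x ≤ F (x, xt))
    (hdiag : ∀ x : EuclideanSpace ℝ (Fin d), F (x, x) = f x)
    (hτ0 : 0 < τ) (hτ : τ < 1 / L)
    (hbdd : BddBelow (Set.range fun z : EuclideanSpace ℝ (Fin d) => f z + g z))
    (x : ℕ → EuclideanSpace ℝ (Fin d))
    (hiter : ∀ n : ℕ, ∀ z : EuclideanSpace ℝ (Fin d),
      F (x (n + 1), x n) + g (x n) + ⟪x (n + 1) - x n, gradient g (x n)⟫ +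
          (1 / (2 * τ)) * ‖x (n + 1) - x n‖ ^ 2
        ≤ F (z, x n) + g (x n) + ⟪z - x n, gradient g (x n)⟫ +
          (1 / (2 * τ)) * ‖z - x n‖ ^ 2) :
    Filter.Tendsto (fun n : ℕ => ‖x (n + 1) - x n‖) Filter.atTop (nhds 0) := by
  set h : ℕ → ℝ := fun n => f (x n) + g (x n) with hh
  set c : ℝ := 1 / (2 * τ) - L / 2 with hc
  have hcpos : 0 < c := by
    have h1 : L * τ < 1 := by
      have := (lt_div_iff₀ hL).1 hτ
      linarith
    have h2 : L / 2 < 1 / (2 * τ) := by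
      rw [div_lt_div_iff₀ (by norm_num) (by positivity)]
      linarith
    rw [hc, sub_pos]
    exact h2
  have hkey : ∀ n, h (n + 1) + c * ‖x (n + 1) - x n‖ ^ 2 ≤ h n := by
    intro n
    have h1 := hiter n (x n)
    simp only [sub_self, inner_zero_left, norm_zero, hdiag] at h1
    have h2 := descent_lemma g L hL.le hg hlip (x n) (x (n + 1))
    have h3 := hmaj (x (n + 1)) (x n)
    have h4 : ⟪gradient g (x n), x (n + 1) - x n⟫ = ⟪x (n + 1) - x n, gradient g (x n)⟫ :=
      real_inner_comm _ _
    simp only [hh, hc]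
    rw [h4] at h2
    nlinarith [norm_nonneg (x (n + 1) - x n)]
  have hanti : Antitone h := antitone_nat_of_succ_le fun n => by
    nlinarith [hkey n, sq_nonneg (‖x (n + 1) - x n‖), hcpos,
      mul_nonneg hcpos.le (sq_nonneg (‖x (n + 1) - x n‖))]
  have hbdd' : BddBelow (Set.range h) := by
    obtain ⟨B, hB⟩ := hbdd
    exact ⟨B, fun y ⟨n, hn⟩ => hn ▸ hB ⟨x n, rfl⟩⟩
  have hlim : Filter.Tendsto h Filter.atTop (nhds (⨅ n, h n)) :=
    tendsto_atTop_ciInf hanti hbdd'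
  have hdiff : Filter.Tendsto (fun n => h n - h (n + 1)) Filter.atTop (nhds 0) := by
    have := hlim.sub (hlim.comp (Filter.tendsto_add_atTop_nat 1))
    simpa using this
  have hsq : Filter.Tendsto (fun n => ‖x (n + 1) - x n‖ ^ 2) Filter.atTop (nhds 0) := by
    have hub : ∀ n, ‖x (n + 1) - x n‖ ^ 2 ≤ (h n - h (n + 1)) / c := by
      intro n
      exact (le_div_iff₀' hcpos).2 (by linarith [hkey n])
    have hto : Filter.Tendsto (fun n => (h n - h (n + 1)) / c) Filter.atTop (nhds 0) := by
      have := hdiff.div_const c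
      simpa using this
    exact squeeze_zero (fun n => sq_nonneg _) hub hto
  have := hsq.sqrt
  simp only [Real.sqrt_zero] at this
  convert this using 2 with n
  rw [Real.sqrt_sq (norm_nonneg _)]
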